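/- For any admissible configuration X and any word α with L(α) > H(α) + 1, we have ε_X(α) = 0. -/

import Mathlib

open scoped Classical

/-- A configuration of the infinite-bin model: number of balls in each bin. -/
abbrev Config := ℤ → ℕ∞

/-- Admissible configuration: nonempty bins form a semi-infinite interval, and
every bin to the left of an infinite bin is infinite. -/
def IsAdmissible (X : Config) : Prop :=
  (∃ m : ℤ, ∀ j : ℤ, X j ≠ 0 ↔ j ≤ m) ∧ ∀ j : ℤ, X j = ⊤ → X (j - 1) = ⊤

/-- N(X,k): number of balls in bins of index ≥ k. -/
noncomputable def Nballs (X : Config) (k : ℤ) : ℕ∞ := ∑' j : {j : ℤ // k ≤ j}, X j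

/-- B(X,ξ): leftmost position such that there are fewer than ξ balls to its right. -/
noncomputable def Bpos (X : Config) (ξ : ℕ) : ℤ := sInf {j : ℤ | Nballs X j < (ξ : ℕ∞)}

/-- The move of type ξ: add one ball in the bin of index B(X,ξ). -/
noncomputable def Phi (ξ : ℕ) (X : Config) : Config :=
  fun j => X j + (if j = Bpos X ξ then 1 else 0)

/-- The move of type ξ ∈ ℕ ∪ {∞}, with Φ_∞ = id. -/
noncomputable def PhiE (ξ : ℕ∞) (X : Config) : Config :=
  if ξ = ⊤ then X else Phi ξ.toNat X

/-- The shift operator τ. -/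
def shift (X : Config) : Config := fun j => X (j - 1)

/-- Configuration obtained after applying successively the moves listed in α. -/
noncomputable def applyWord (X : Config) (α : List ℕ) : Config :=
  α.foldl (fun Y a => Phi a Y) X

/-- d_X(α): displacement of the front after performing the word α. -/
noncomputable def dX (X : Config) (α : List ℕ) : ℤ :=
  Bpos (applyWord X α) 1 - Bpos X 1

/-- α ∈ P_X : α is nonempty and its last move places a ball in a previously empty bin. -/
def inP (X : Config) (α : List ℕ) : Prop :=
  ∃ β a, α = β ++ [a] ∧ applyWord X β (Bpos (applyWord X β) a) = 0

/-- ε_X(α) = 1_{α ∈ P_X} - 1_{ϖα ∈ P_X}. -/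
noncomputable def eps (X : Config) (α : List ℕ) : ℤ :=
  (if inP X α then 1 else 0) - (if inP X α.tail then 1 else 0)

lemma enat_summable {ι : Type*} (f : ι → ℕ∞) : Summable f :=
  ⟨_, tendsto_atTop_iSup (fun _ _ h => Finset.sum_le_sum_of_subset h)⟩

lemma nballs_eq (X : Config) (k : ℤ) :
    Nballs X k = ∑' j : ℤ, (Set.Ici k).indicator X j := tsum_subtype _ _

lemma nballs_succ (X : Config) (k : ℤ) : Nballs X k = X k + Nballs X (k + 1) := by
  rw [nballs_eq, nballs_eq]
  have hpt : ∀ j : ℤ, (Set.Ici k).indicator X j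
      = (fun j => if j = k then X k else 0) j + (Set.Ici (k+1)).indicator X j := by
    intro j
    simp only [Set.indicator_apply, Set.mem_Ici]
    by_cases h1 : j = k
    · subst h1; rw [if_pos le_rfl, if_pos rfl, if_neg (by omega)]; simp
    · rw [if_neg h1]
      by_cases h2 : k ≤ j
      · rw [if_pos h2, if_pos (by omega)]; simp
      · rw [if_neg h2, if_neg (by omega)]; simp
  rw [tsum_congr hpt, Summable.tsum_add (enat_summable _) (enat_summable _), tsum_ite_eq]

lemma nballs_zero (X : Config) (k : ℤ) (h : ∀ j, k ≤ j → X j = 0) : Nballs X k = 0 := by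
  have : ∀ j : {j : ℤ // k ≤ j}, X (j : ℤ) = 0 := fun j => h j j.2
  exact (tsum_congr this).trans tsum_zero

lemma nballs_lower (X : Config) (f : ℤ) (n : ℕ)
    (hne : ∀ j, f - n ≤ j → j < f → X j ≠ 0) :
    (n : ℕ∞) + Nballs X f ≤ Nballs X (f - n) := by
  induction n with
  | zero => simp
  | succ n ih =>
    have e : f - ((n : ℕ) + 1 : ℕ) + 1 = f - n := by push_cast; ring
    rw [nballs_succ X (f - ((n : ℕ)+1 : ℕ)), e]
    have hx : 1 ≤ X (f - ((n:ℕ)+1:ℕ)) :=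
      ENat.one_le_iff_ne_zero.2 (hne _ (by push_cast; omega) (by push_cast; omega))
    have ihh := ih (fun j h1 h2 => hne j (by push_cast at h1 ⊢; omega) h2)
    calc ((n+1 : ℕ) : ℕ∞) + Nballs X f = 1 + ((n : ℕ∞) + Nballs X f) := by push_cast; ring
    _ ≤ X (f - ((n:ℕ)+1:ℕ)) + Nballs X (f - n) := add_le_add hx ihh

lemma nballs_phi (X : Config) (a : ℕ) (k : ℤ) :
    Nballs (Phi a X) k = Nballs X k + (if k ≤ Bpos X a then 1 else 0) := by
  rw [nballs_eq, nballs_eq]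
  set B := Bpos X a with hB
  have hpt : ∀ j : ℤ, (Set.Ici k).indicator (Phi a X) j
      = (Set.Ici k).indicator X j + (fun j => if j = B ∧ k ≤ B then 1 else 0) j := by
    intro j
    simp only [Set.indicator_apply, Set.mem_Ici, Phi, ← hB]
    by_cases h1 : j = B
    · subst h1
      by_cases h2 : k ≤ B
      · simp [h2]
      · simp [h2]
    · by_cases h2 : k ≤ j <;> simp [h1, h2]
  rw [tsum_congr hpt, Summable.tsum_add (enat_summable _) (enat_summable _)]
  congr 1
  by_cases h : k ≤ B
  · have : (fun j : ℤ => if j = B ∧ k ≤ B then (1:ℕ∞) else 0)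
        = fun j : ℤ => if j = B then (1:ℕ∞) else 0 := by
      funext j; simp [h]
    rw [this, tsum_ite_eq, if_pos h]
  · have : (fun j : ℤ => if j = B ∧ k ≤ B then (1:ℕ∞) else 0) = fun _ => (0:ℕ∞) := by
      funext j; simp [h]
    rw [this, tsum_zero, if_neg h]

lemma nballs_shift (Y Y' : Config) (f f' : ℤ)
    (hm : ∀ j : ℤ, 0 ≤ j → Y (f + j) = Y' (f' + j)) (d : ℤ) (hd : 0 ≤ d) :
    Nballs Y (f + d) = Nballs Y' (f' + d) := by
  rw [nballs_eq, nballs_eq]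
  rw [← (Equiv.addRight f).tsum_eq ((Set.Ici (f+d)).indicator Y),
      ← (Equiv.addRight f').tsum_eq ((Set.Ici (f'+d)).indicator Y')]
  refine tsum_congr fun i => ?_
  simp only [Equiv.coe_addRight, Set.indicator_apply, Set.mem_Ici]
  by_cases h : d ≤ i
  · rw [if_pos (by omega), if_pos (by omega)]
    have := hm i (by omega)
    rw [show i + f = f + i by ring, show i + f' = f' + i by ring, this]
  · rw [if_neg (by omega), if_neg (by omega)]

/-- `f` is the front: bins `< f` nonempty, bins `≥ f` empty. -/
def HasFront (X : Config) (f : ℤ) : Prop := ∀ j : ℤ, X j ≠ 0 ↔ j < f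

lemma hasFront_zero {X : Config} {f : ℤ} (h : HasFront X f) {j : ℤ} (hj : f ≤ j) : X j = 0 :=
  by_contra fun hc => absurd ((h j).1 hc) (by omega)

lemma nballs_lt_of_front {X : Config} {f : ℤ} (h : HasFront X f) {a : ℕ} (ha : 1 ≤ a) :
    Nballs X f < (a : ℕ∞) := by
  rw [nballs_zero X f (fun j hj => hasFront_zero h hj)]
  exact_mod_cast (by omega : 0 < a)

lemma nballs_big_of_front {X : Config} {f : ℤ} (h : HasFront X f) {j : ℤ} (hj : j < f) {a : ℕ}
    (haj : (a : ℤ) ≤ f - j) : (a : ℕ∞) ≤ Nballs X j := by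
  have hn : j = f - ((f - j).toNat : ℕ) := by omega
  have := nballs_lower X f (f - j).toNat (fun i h1 h2 => (h i).2 (by omega))
  rw [← hn] at this
  calc (a : ℕ∞) ≤ ((f - j).toNat : ℕ∞) := by exact_mod_cast (by omega : a ≤ (f-j).toNat)
  _ ≤ _ := le_trans (le_add_right le_rfl) this

lemma bpos_le_front {X : Config} {f : ℤ} (h : HasFront X f) {a : ℕ} (ha : 1 ≤ a) :
    Bpos X a ≤ f := by
  have hb : BddBelow {j : ℤ | Nballs X j < (a : ℕ∞)} := by
    refine ⟨f - a, fun j hj => ?_⟩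
    by_contra hc
    exact absurd (nballs_big_of_front h (j := j) (by omega) (by omega)) (not_le.2 hj)
  exact csInf_le hb (nballs_lt_of_front h ha)

lemma hasFront_phi {X : Config} {f : ℤ} (h : HasFront X f) {a : ℕ} (ha : 1 ≤ a) :
    HasFront (Phi a X) (max f (Bpos X a + 1)) := by
  have hle := bpos_le_front h ha
  intro j
  have : Phi a X j ≠ 0 ↔ (X j ≠ 0 ∨ j = Bpos X a) := by
    simp only [Phi]
    by_cases hj : j = Bpos X a <;> simp [hj, add_eq_zero]
  rw [this, h j]
  omega

lemma hasFront_applyWord {X : Config} {f : ℤ} (h : HasFront X f) (w : List ℕ)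
    (hw : ∀ a ∈ w, 1 ≤ a) : ∃ f', HasFront (applyWord X w) f' := by
  induction w generalizing X f with
  | nil => exact ⟨f, h⟩
  | cons a w ih =>
      exact ih (hasFront_phi h (hw a (by simp))) (fun b hb => hw b (by simp [hb]))

/-- Coupling invariant after `c` moves above the original fronts `f`, `f'`. -/
def CInv (c : ℕ) (Y Y' : Config) (f f' : ℤ) : Prop :=
  (∀ j : ℤ, 0 ≤ j → Y (f + j) = Y' (f' + j)) ∧
  (∀ j : ℤ, j < f → Y j ≠ 0) ∧ (∀ j : ℤ, j < f' → Y' j ≠ 0) ∧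
  Nballs Y f = (c : ℕ∞) ∧ Nballs Y' f' = (c : ℕ∞) ∧
  (∀ j : ℤ, f + c ≤ j → Y j = 0) ∧ (∀ j : ℤ, f' + c ≤ j → Y' j = 0)

lemma cinv_of_fronts {Y Y' : Config} {f f' : ℤ} (h : HasFront Y f) (h' : HasFront Y' f') :
    CInv 0 Y Y' f f' := by
  refine ⟨fun j hj => ?_, fun j hj => (h j).2 hj, fun j hj => (h' j).2 hj,
    ?_, ?_, fun j hj => hasFront_zero h (by omega), fun j hj => hasFront_zero h' (by omega)⟩
  · rw [hasFront_zero h (by omega), hasFront_zero h' (by omega)]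
  · rw [nballs_zero Y f (fun j hj => hasFront_zero h hj)]; simp
  · rw [nballs_zero Y' f' (fun j hj => hasFront_zero h' hj)]; simp

/-- For a configuration satisfying the invariant, `Nballs` below the front is at least `c+1`. -/
lemma cinv_nballs_big {Y : Config} {f : ℤ} {c : ℕ}
    (h2 : ∀ j : ℤ, j < f → Y j ≠ 0) (h4 : Nballs Y f = (c : ℕ∞))
    {j : ℤ} (hj : j < f) : ((c + 1 : ℕ) : ℕ∞) ≤ Nballs Y j := by
  have hn : j = f - ((f - j).toNat : ℕ) := by omega
  have hlow := nballs_lower Y f (f - j).toNat (fun i h1 hi => h2 i hi)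
  rw [← hn, h4] at hlow
  refine le_trans ?_ hlow
  have h1 : (1 : ℕ∞) ≤ ((f - j).toNat : ℕ∞) := by exact_mod_cast (by omega : 1 ≤ (f-j).toNat)
  calc ((c + 1 : ℕ) : ℕ∞) = 1 + (c : ℕ∞) := by push_cast; ring
  _ ≤ _ := add_le_add h1 le_rfl

lemma cinv_step {c : ℕ} {Y Y' : Config} {f f' : ℤ} (hI : CInv c Y Y' f f')
    {a : ℕ} (ha : 1 ≤ a) (hac : a ≤ c + 1) :
    f ≤ Bpos Y a ∧ Bpos Y a - f = Bpos Y' a - f' ∧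
      Y (Bpos Y a) = Y' (Bpos Y' a) ∧ CInv (c + 1) (Phi a Y) (Phi a Y') f f' := by
  obtain ⟨h1, h2, h3, h4, h5, h6, h7⟩ := hI
  have key : ∀ d : ℤ, 0 ≤ d → Nballs Y (f + d) = Nballs Y' (f' + d) :=
    nballs_shift Y Y' f f' h1
  -- the sets involved
  set S := {j : ℤ | Nballs Y j < (a : ℕ∞)} with hS
  set S' := {j : ℤ | Nballs Y' j < (a : ℕ∞)} with hS'
  have hca : ((a : ℕ∞)) ≤ ((c + 1 : ℕ) : ℕ∞) := by exact_mod_cast hac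
  have hmemS : f + (c : ℤ) ∈ S := by
    have : Nballs Y (f + c) = 0 := nballs_zero _ _ (fun j hj => h6 j hj)
    simp only [hS, Set.mem_setOf_eq, this]
    exact_mod_cast (by omega : 0 < a)
  have hmemS' : f' + (c : ℤ) ∈ S' := by
    have : Nballs Y' (f' + c) = 0 := nballs_zero _ _ (fun j hj => h7 j hj)
    simp only [hS', Set.mem_setOf_eq, this]
    exact_mod_cast (by omega : 0 < a)
  have hlbS : ∀ j ∈ S, f ≤ j := by
    intro j hj
    by_contra hc
    exact absurd (le_trans hca (cinv_nballs_big h2 h4 (by omega))) (not_le.2 hj)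
  have hlbS' : ∀ j ∈ S', f' ≤ j := by
    intro j hj
    by_contra hc
    exact absurd (le_trans hca (cinv_nballs_big h3 h5 (by omega))) (not_le.2 hj)
  have hBf : f ≤ Bpos Y a := le_csInf ⟨_, hmemS⟩ hlbS
  have hBf' : f' ≤ Bpos Y' a := le_csInf ⟨_, hmemS'⟩ hlbS'
  have hBmem : Bpos Y a ∈ S := Int.csInf_mem ⟨_, hmemS⟩ ⟨f, hlbS⟩
  have hBmem' : Bpos Y' a ∈ S' := Int.csInf_mem ⟨_, hmemS'⟩ ⟨f', hlbS'⟩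
  have hBc : Bpos Y a ≤ f + c := csInf_le ⟨f, hlbS⟩ hmemS
  have hBc' : Bpos Y' a ≤ f' + c := csInf_le ⟨f', hlbS'⟩ hmemS'
  -- equality of offsets
  have hle1 : Bpos Y' a ≤ Bpos Y a - f + f' := by
    refine csInf_le ⟨f', hlbS'⟩ ?_
    have := key (Bpos Y a - f) (by omega)
    simp only [hS', Set.mem_setOf_eq]
    rw [show Bpos Y a - f + f' = f' + (Bpos Y a - f) by ring, ← this,
      show f + (Bpos Y a - f) = Bpos Y a by ring]
    exact hBmem
  have hle2 : Bpos Y a ≤ Bpos Y' a - f' + f := by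
    refine csInf_le ⟨f, hlbS⟩ ?_
    have := key (Bpos Y' a - f') (by omega)
    simp only [hS, Set.mem_setOf_eq]
    rw [show Bpos Y' a - f' + f = f + (Bpos Y' a - f') by ring, this,
      show f' + (Bpos Y' a - f') = Bpos Y' a by ring]
    exact hBmem'
  have hdiff : Bpos Y a - f = Bpos Y' a - f' := by omega
  have hagree : Y (Bpos Y a) = Y' (Bpos Y' a) := by
    have := h1 (Bpos Y a - f) (by omega)
    rw [show f + (Bpos Y a - f) = Bpos Y a by ring] at this
    rw [this, show f' + (Bpos Y a - f) = Bpos Y' a by omega]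
  refine ⟨hBf, hdiff, hagree, ?_, ?_, ?_, ?_, ?_, ?_, ?_⟩
  · intro j hj
    simp only [Phi]
    rw [h1 j hj]
    congr 1
    have : f + j = Bpos Y a ↔ f' + j = Bpos Y' a := by omega
    by_cases hc : f + j = Bpos Y a
    · rw [if_pos hc, if_pos (this.1 hc)]
    · rw [if_neg hc, if_neg (fun hc2 => hc (this.2 hc2))]
  · intro j hj
    exact fun hzero => h2 j hj (add_eq_zero.1 hzero).1
  · intro j hj
    exact fun hzero => h3 j hj (add_eq_zero.1 hzero).1
  · rw [nballs_phi, h4, if_pos hBf]; push_cast; ring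
  · rw [nballs_phi, h5, if_pos hBf']; push_cast; ring
  · intro j hj
    simp only [Phi]
    rw [h6 j (by push_cast at hj ⊢; omega), if_neg (by omega)]
    simp
  · intro j hj
    simp only [Phi]
    rw [h7 j (by push_cast at hj ⊢; omega), if_neg (by omega)]
    simp

lemma cinv_run (w : List ℕ) : ∀ (c : ℕ) (Y Y' : Config) (f f' : ℤ), CInv c Y Y' f f' →
    (∀ a ∈ w, 1 ≤ a) → (∀ (i : ℕ) (hi : i < w.length), w.get ⟨i, hi⟩ ≤ c + i + 1) →
    CInv (c + w.length) (applyWord Y w) (applyWord Y' w) f f' := by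
  induction w with
  | nil => intro c Y Y' f f' hI _ _; simpa [applyWord] using hI
  | cons a w ih =>
    intro c Y Y' f f' hI hw hcond
    have ha : 1 ≤ a := hw a (by simp)
    have hac : a ≤ c + 1 := by simpa using hcond 0 (by simp)
    have hstep := (cinv_step hI ha hac).2.2.2
    have : CInv (c + 1 + w.length) (applyWord (Phi a Y) w) (applyWord (Phi a Y') w) f f' := by
      refine ih (c+1) _ _ f f' hstep (fun b hb => hw b (by simp [hb])) ?_
      intro i hi
      have := hcond (i+1) (by simpa using Nat.succ_lt_succ hi)
      simpa [Nat.add_assoc, Nat.add_comm 1 i] using this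
    have e1 : applyWord Y (a :: w) = applyWord (Phi a Y) w := rfl
    have e2 : applyWord Y' (a :: w) = applyWord (Phi a Y') w := rfl
    rw [e1, e2, List.length_cons, show c + (w.length + 1) = c + 1 + w.length by omega]
    exact this

lemma inP_concat (X : Config) (β : List ℕ) (a : ℕ) :
    inP X (β ++ [a]) ↔ applyWord X β (Bpos (applyWord X β) a) = 0 := by
  constructor
  · rintro ⟨β', a', heq, hz⟩
    obtain ⟨h1, h2⟩ := List.append_inj' heq rfl
    obtain rfl : a = a' := by simpa using h2
    obtain rfl : β = β' := h1
    exact hz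
  · intro hz; exact ⟨β, a, rfl, hz⟩

lemma applyWord_append (X : Config) (l l' : List ℕ) :
    applyWord X (l ++ l') = applyWord (applyWord X l) l' := by
  simp [applyWord, List.foldl_append]

/-- Decomposition: a short word admits a nonempty suffix (with nonempty prefix)
all of whose prefix sums are small. -/
lemma decomp (α : List ℕ) (hα : ∀ a ∈ α, 1 ≤ a) (h : α.sum + 1 < 2 * α.length) :
    ∃ p s : List ℕ, α = p ++ s ∧ p ≠ [] ∧ s ≠ [] ∧
      ∀ k, 1 ≤ k → k ≤ s.length → (s.take k).sum + 1 ≤ 2 * k := by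
  set L := α.length with hL
  have hsum_take : ∀ t, t ≤ L → t ≤ (α.take t).sum := by
    intro t ht
    have hlen : (α.take t).length = t := by simp [hL.symm ▸ ht]
    calc t = (α.take t).length := hlen.symm
    _ ≤ (α.take t).sum := List.length_le_sum_of_one_le _ (fun i hi => hα i (List.take_subset _ _ hi))
  have hL2 : 2 ≤ L := by
    have := hsum_take L le_rfl
    rw [List.take_length] at this
    omega
  set g : ℕ → ℤ := fun t => 2 * t - ((α.take t).sum : ℤ) with hg
  set I : Finset ℕ := Finset.Icc 1 (L - 1) with hI
  have h1I : 1 ∈ I := by simp [hI]; omega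
  obtain ⟨n0, hn0I, hn0min⟩ := I.exists_min_image g ⟨1, h1I⟩
  set T : Finset ℕ := I.filter (fun n => g n ≤ g n0) with hT
  have hTne : T.Nonempty := ⟨n0, by simp [hT, hn0I]⟩
  set n := T.max' hTne with hn
  have hnT : n ∈ T := T.max'_mem hTne
  have hnI : n ∈ I := (Finset.mem_filter.1 hnT).1
  have hnmin : ∀ m ∈ I, g n ≤ g m := fun m hm =>
    le_trans (Finset.mem_filter.1 hnT).2 (hn0min m hm)
  have hn1 : 1 ≤ n ∧ n ≤ L - 1 := by simpa [hI, Finset.mem_Icc] using hnI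
  have hgn0 : g n ≤ g n0 := (Finset.mem_filter.1 hnT).2
  -- g n ≤ 1
  have hgn1 : g n ≤ 1 := by
    have h1le : (1:ℤ) ≤ ((α.take 1).sum : ℤ) := by exact_mod_cast hsum_take 1 (by omega)
    have h2le := hnmin 1 h1I
    simp only [hg] at h2le ⊢
    omega
  -- g L ≥ 2
  have hgL : 2 ≤ g L := by
    have hC : (α.sum : ℤ) + 1 < 2 * (L : ℤ) := by rw [hL]; exact_mod_cast h
    have htake : α.take L = α := by rw [hL]; exact List.take_length
    simp only [hg, htake]
    omega
  -- strict increase after n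
  have hkey : ∀ t, n < t → t ≤ L → g n + 1 ≤ g t := by
    intro t hnt htL
    rcases eq_or_lt_of_le htL with rfl | htL'
    · omega
    · have htI : t ∈ I := by simp [hI, Finset.mem_Icc]; omega
      have h1 : g n ≤ g t := hnmin t htI
      rcases eq_or_lt_of_le h1 with heq | hlt
      · exfalso
        have : t ∈ T := by
          simp only [hT, Finset.mem_filter]
          exact ⟨htI, by omega⟩
        have := T.le_max' t this
        omega
      · omega
  refine ⟨α.take n, α.drop n, (List.take_append_drop n α).symm, ?_, ?_, ?_⟩
  · have : (α.take n).length = n := by simp [hL.symm]; omega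
    intro hc; rw [hc] at this; simp at this; omega
  · have : (α.drop n).length = L - n := by simp [hL.symm]
    intro hc; rw [hc] at this; simp at this; omega
  · intro k hk1 hks
    have hlen : (α.drop n).length = L - n := by simp [hL.symm]
    have hnk : n + k ≤ L := by omega
    have hsplit : α.take (n + k) = α.take n ++ (α.drop n).take k := List.take_add
    have hsums : (α.take (n+k)).sum = (α.take n).sum + ((α.drop n).take k).sum := by
      rw [hsplit, List.sum_append]
    have := hkey (n + k) (by omega) hnk
    simp only [hg] at this
    rw [hsums] at this
    omega

/-- For any admissible configuration X and word α with L(α) > H(α) + 1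
(equivalently Σ α_i + 1 < 2 L(α), where H(α) = Σ α_i − L(α)), ε_X(α) = 0. -/
theorem eps_eq_zero_of_length_gt_height (X : Config) (hX : IsAdmissible X)
    (α : List ℕ) (hα : ∀ a ∈ α, 1 ≤ a) (h : α.sum + 1 < 2 * α.length) :
    eps X α = 0 := by
  obtain ⟨⟨m, hm⟩, -⟩ := hX
  have hf0 : HasFront X (m + 1) := fun j => by rw [hm j]; omega
  obtain ⟨p, s, rfl, hp, hs, hpre⟩ := decomp α hα h
  set w := s.dropLast with hwdef
  set aL := s.getLast hs with haLdef
  have hws : w ++ [aL] = s := List.dropLast_append_getLast hs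
  have hmem : ∀ a ∈ s, 1 ≤ a := fun a ha => hα a (List.mem_append_right p ha)
  have hpL : ∀ a ∈ p, 1 ≤ a := fun a ha => hα a (List.mem_append_left s ha)
  have hwL : ∀ a ∈ w, 1 ≤ a := fun a ha => hmem a (hws ▸ List.mem_append_left [aL] ha)
  have haL1 : 1 ≤ aL := hmem aL (List.getLast_mem hs)
  obtain ⟨f, hYf⟩ := hasFront_applyWord hf0 p hpL
  obtain ⟨f', hYf'⟩ := hasFront_applyWord hf0 p.tail
    (fun a ha => hpL a (List.mem_of_mem_tail ha))
  have hI0 := cinv_of_fronts hYf hYf'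
  have hlw : s.length = w.length + 1 := by rw [← hws]; simp
  have hcond : ∀ (i : ℕ) (hi : i < w.length), w.get ⟨i, hi⟩ ≤ 0 + i + 1 := by
    intro i hi
    have hteq : ∀ k, k ≤ w.length → s.take k = w.take k := fun k hk => by
      rw [← hws, List.take_append_of_le_length hk]
    have h1 := hpre (i + 1) (by omega) (by omega)
    rw [hteq (i + 1) (by omega)] at h1
    have h2 : i ≤ (w.take i).sum := by
      have hlent : (w.take i).length = i := by simp; omega
      calc i = (w.take i).length := hlent.symm
      _ ≤ _ := List.length_le_sum_of_one_le _ (fun a ha => hwL a (List.take_subset _ _ ha))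
    have h3 := List.sum_take_succ w i hi
    simp only [List.get_eq_getElem]
    omega
  have hrun := cinv_run w 0 (applyWord X p) (applyWord X p.tail) f f' hI0 hwL hcond
  have haLle : aL ≤ 0 + w.length + 1 := by
    have h1 := hpre s.length (by omega) le_rfl
    rw [List.take_length] at h1
    have h2 : s.sum = w.sum + aL := by rw [← hws]; simp
    have h3 : w.length ≤ w.sum := List.length_le_sum_of_one_le w hwL
    omega
  obtain ⟨-, -, hagree, -⟩ := cinv_step hrun haL1 haLle
  have hα1 : p ++ s = (p ++ w) ++ [aL] := by rw [← hws, List.append_assoc]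
  have hiff1 : inP X (p ++ s) ↔
      applyWord (applyWord X p) w (Bpos (applyWord (applyWord X p) w) aL) = 0 := by
    rw [hα1, inP_concat, applyWord_append]
  have htail : (p ++ s).tail = p.tail ++ s := by
    obtain ⟨p0, pt, rfl⟩ : ∃ p0 pt, p = p0 :: pt := by
      cases p with
      | nil => exact absurd rfl hp
      | cons p0 pt => exact ⟨p0, pt, rfl⟩
    rfl
  have hα2 : p.tail ++ s = (p.tail ++ w) ++ [aL] := by rw [← hws, List.append_assoc]
  have hiff2 : inP X ((p ++ s).tail) ↔
      applyWord (applyWord X p.tail) w (Bpos (applyWord (applyWord X p.tail) w) aL) = 0 := by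
    rw [htail, hα2, inP_concat, applyWord_append]
  have hkey : inP X (p ++ s) ↔ inP X ((p ++ s).tail) := by
    rw [hiff1, hiff2, hagree]
  simp [eps, hkey]
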